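/- arXiv:1912.08504 — 2 statements merged into one kernel-verified Lean document; each statement's English description precedes it below -/
import Mathlib

section
/- Let $T : \mathcal{B}(X) \to \mathcal{B}(X)$ be a contraction with modulus $\alpha \in (0,1)$ and fixed point $J_T \in \mathcal{B}(X)$, and let $w_\ell : X \to [0,\infty)$ satisfy $\sum_{\ell=1}^\infty w_\ell(x) = 1$ for all $x$. Then the pointwise-defined operator $(T^{(w)} J)(x) = \sum_{\ell=1}^\infty w_\ell(x)(T^\ell J)(x)$ maps $\mathcal{B}(X)$ into $\mathcal{B}(X)$; moreover $|(T^{(w)} J)(x) - J_T(x)| \le \bar\alpha \|J - J_T\| v(x)$ for all $x$, where $\bar\alpha = \sup_{x \in X} \sum_{\ell=1}^\infty w_\ell(x) \alpha^\ell \le \alpha$. -/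
open Filter Topology

noncomputable def wnorm {X : Type*} (v : X → ℝ) (J : X → ℝ) : ℝ := ⨆ x, |J x| / v x

def memB {X : Type*} (v : X → ℝ) (J : X → ℝ) : Prop := ∃ C : ℝ, ∀ x, |J x| / v x ≤ C

lemma memB_le_wnorm {X : Type*} (v : X → ℝ) (hv : ∀ x, 0 < v x) (f : X → ℝ)
    (hf : memB v f) (x : X) : |f x| ≤ wnorm v f * v x := by
  obtain ⟨C, hC⟩ := hf
  have hb : BddAbove (Set.range fun x => |f x| / v x) := ⟨C, by rintro _ ⟨y, rfl⟩; exact hC y⟩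
  have h := le_ciSup hb x
  rw [div_le_iff₀ (hv x)] at h
  exact h

lemma memB_sub {X : Type*} (v : X → ℝ) (hv : ∀ x, 0 < v x) (f g : X → ℝ)
    (hf : memB v f) (hg : memB v g) : memB v (fun x => f x - g x) := by
  obtain ⟨C, hC⟩ := hf; obtain ⟨D, hD⟩ := hg
  refine ⟨C + D, fun x => ?_⟩
  calc |f x - g x| / v x ≤ (|f x| + |g x|) / v x := by
        have h := abs_sub (f x) (g x)
        gcongr
        exact (hv x).le
    _ = |f x| / v x + |g x| / v x := add_div _ _ _
    _ ≤ C + D := add_le_add (hC x) (hD x)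

set_option maxHeartbeats 800000 in
lemma abs_tsum_le' (f : ℕ → ℝ) (hf : Summable fun n => |f n|) :
    |∑' n, f n| ≤ ∑' n, |f n| := by
  simpa only [Real.norm_eq_abs] using
    norm_tsum_le_tsum_norm (f := f) (by simpa only [Real.norm_eq_abs] using hf)

set_option maxHeartbeats 800000 in
/-- the multistep operator `T^{(w)}` maps `𝓑(X)` into `𝓑(X)`, with
`|(T^{(w)}J)(x) - J_T(x)| ≤ ᾱ ‖J - J_T‖ v(x)` where
`ᾱ = ⨆ x, ∑_ℓ w_ℓ(x) α^ℓ ≤ α`.  (Here `w ℓ` stands for `w_{ℓ+1}`.) -/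
theorem stmt4 {X : Type*} [Nonempty X] (v : X → ℝ) (hv : ∀ x, 0 < v x)
    (T : (X → ℝ) → (X → ℝ)) (α : ℝ) (hα : α ∈ Set.Ioo (0 : ℝ) 1)
    (hT : ∀ J, memB v J → memB v (T J))
    (hcontr : ∀ J J', memB v J → memB v J' →
      wnorm v (fun x => T J x - T J' x) ≤ α * wnorm v (fun x => J x - J' x))
    (JT : X → ℝ) (hJT : memB v JT) (hfix : T JT = JT)
    (w : ℕ → X → ℝ) (hw0 : ∀ ℓ x, 0 ≤ w ℓ x)
    (hw1 : ∀ x, HasSum (fun ℓ : ℕ => w ℓ x) 1)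
    (J : X → ℝ) (hJ : memB v J) :
    (⨆ x, ∑' ℓ : ℕ, w ℓ x * α ^ (ℓ + 1)) ≤ α ∧
    memB v (fun x => ∑' ℓ : ℕ, w ℓ x * (T^[ℓ + 1] J) x) ∧
    ∀ x, |(∑' ℓ : ℕ, w ℓ x * (T^[ℓ + 1] J) x) - JT x| ≤
      (⨆ y, ∑' ℓ : ℕ, w ℓ y * α ^ (ℓ + 1)) *
        wnorm v (fun y => J y - JT y) * v x := by
  obtain ⟨hα0, hα1⟩ := hα
  set N := wnorm v (fun y => J y - JT y) with hN
  -- membership of iterates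
  have hmem : ∀ n, memB v (T^[n] J) := by
    intro n; induction n with
    | zero => simpa using hJ
    | succ n ih => rw [Function.iterate_succ_apply']; exact hT _ ih
  -- contraction estimate on wnorm
  have hwn : ∀ n, wnorm v (fun x => T^[n] J x - JT x) ≤ α ^ n * N := by
    intro n; induction n with
    | zero => simp; exact le_rfl
    | succ n ih =>
        have h1 : (fun x => T^[n+1] J x - JT x)
            = fun x => T (T^[n] J) x - T JT x := by
          funext x; rw [Function.iterate_succ_apply', hfix]
        rw [h1]
        calc wnorm v (fun x => T (T^[n] J) x - T JT x)
            ≤ α * wnorm v (fun x => T^[n] J x - JT x) := hcontr _ _ (hmem n) hJT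
          _ ≤ α * (α ^ n * N) := by
              exact mul_le_mul_of_nonneg_left ih hα0.le
          _ = α ^ (n + 1) * N := by ring
  have hmemd : ∀ n, memB v (fun x => T^[n] J x - JT x) :=
    fun n => memB_sub v hv _ _ (hmem n) hJT
  -- pointwise estimate
  have hptw : ∀ n x, |T^[n] J x - JT x| ≤ α ^ n * N * v x := by
    intro n x
    calc |T^[n] J x - JT x| ≤ wnorm v (fun x => T^[n] J x - JT x) * v x :=
          memB_le_wnorm v hv _ (hmemd n) x
      _ ≤ α ^ n * N * v x := mul_le_mul_of_nonneg_right (hwn n) (hv x).le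
  -- N ≥ 0
  have hN0 : 0 ≤ N := by
    obtain ⟨x⟩ := ‹Nonempty X›
    have := hptw 0 x
    simp only [pow_zero, one_mul] at this
    nlinarith [abs_nonneg (T^[0] J x - JT x), hv x, this]
  -- summability of w * α^(ℓ+1)
  have hsumw : ∀ x, Summable fun ℓ : ℕ => w ℓ x := fun x => (hw1 x).summable
  have hsumα : ∀ x, Summable fun ℓ : ℕ => w ℓ x * α ^ (ℓ + 1) := by
    intro x
    refine Summable.of_nonneg_of_le (fun ℓ => mul_nonneg (hw0 ℓ x) (pow_nonneg hα0.le _))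
      (fun ℓ => ?_) (hsumw x)
    nlinarith [hw0 ℓ x, pow_le_one₀ hα0.le hα1.le (n := ℓ + 1), pow_nonneg hα0.le (ℓ + 1)]
  -- each tsum ≤ α
  have htsumα : ∀ x, (∑' ℓ : ℕ, w ℓ x * α ^ (ℓ + 1)) ≤ α := by
    intro x
    have h1 : ∀ ℓ : ℕ, w ℓ x * α ^ (ℓ + 1) ≤ w ℓ x * α := by
      intro ℓ
      have : α ^ (ℓ + 1) ≤ α ^ 1 := pow_le_pow_of_le_one hα0.le hα1.le (by omega)
      nlinarith [hw0 ℓ x]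
    have h2 : (∑' ℓ : ℕ, w ℓ x * α) = α := by
      rw [((hw1 x).mul_right α).tsum_eq, one_mul]
    calc (∑' ℓ : ℕ, w ℓ x * α ^ (ℓ + 1)) ≤ ∑' ℓ : ℕ, w ℓ x * α :=
          Summable.tsum_le_tsum h1 (hsumα x) ((hsumw x).mul_right α)
      _ = α := h2
  have hαbar_le : (⨆ x, ∑' ℓ : ℕ, w ℓ x * α ^ (ℓ + 1)) ≤ α := ciSup_le htsumα
  have hbdd : BddAbove (Set.range fun x => ∑' ℓ : ℕ, w ℓ x * α ^ (ℓ + 1)) :=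
    ⟨α, by rintro _ ⟨y, rfl⟩; exact htsumα y⟩
  -- summability of the difference series
  have hsumd : ∀ x, Summable fun ℓ : ℕ => w ℓ x * (T^[ℓ + 1] J x - JT x) := by
    intro x
    apply Summable.of_abs
    refine Summable.of_nonneg_of_le (fun ℓ => abs_nonneg _) (fun ℓ => ?_)
      ((hsumα x).mul_right (N * v x))
    rw [abs_mul, abs_of_nonneg (hw0 ℓ x)]
    calc w ℓ x * |T^[ℓ + 1] J x - JT x| ≤ w ℓ x * (α ^ (ℓ + 1) * N * v x) :=
          mul_le_mul_of_nonneg_left (hptw (ℓ + 1) x) (hw0 ℓ x)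
      _ = w ℓ x * α ^ (ℓ + 1) * (N * v x) := by ring
  -- the key decomposition
  have hdec : ∀ x, (∑' ℓ : ℕ, w ℓ x * T^[ℓ + 1] J x)
      = JT x + ∑' ℓ : ℕ, w ℓ x * (T^[ℓ + 1] J x - JT x) := by
    intro x
    have h1 : (fun ℓ : ℕ => w ℓ x * T^[ℓ + 1] J x)
        = fun ℓ : ℕ => w ℓ x * JT x + w ℓ x * (T^[ℓ + 1] J x - JT x) := by
      funext ℓ; ring
    rw [h1, Summable.tsum_add ((hsumw x).mul_right (JT x)) (hsumd x),
      ((hw1 x).mul_right (JT x)).tsum_eq, one_mul]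
  -- the main estimate (part 3)
  have hmain : ∀ x, |(∑' ℓ : ℕ, w ℓ x * T^[ℓ + 1] J x) - JT x| ≤
      (⨆ y, ∑' ℓ : ℕ, w ℓ y * α ^ (ℓ + 1)) * N * v x := by
    intro x
    rw [hdec x, add_sub_cancel_left]
    calc |∑' ℓ : ℕ, w ℓ x * (T^[ℓ + 1] J x - JT x)|
        ≤ ∑' ℓ : ℕ, |w ℓ x * (T^[ℓ + 1] J x - JT x)| := by
          exact abs_tsum_le' _ (hsumd x).abs
      _ ≤ ∑' ℓ : ℕ, w ℓ x * α ^ (ℓ + 1) * (N * v x) := by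
          refine Summable.tsum_le_tsum (fun ℓ => ?_) ((hsumd x).abs) ((hsumα x).mul_right (N * v x))
          rw [abs_mul, abs_of_nonneg (hw0 ℓ x)]
          calc w ℓ x * |T^[ℓ + 1] J x - JT x| ≤ w ℓ x * (α ^ (ℓ + 1) * N * v x) :=
                mul_le_mul_of_nonneg_left (hptw (ℓ + 1) x) (hw0 ℓ x)
            _ = w ℓ x * α ^ (ℓ + 1) * (N * v x) := by ring
      _ = (∑' ℓ : ℕ, w ℓ x * α ^ (ℓ + 1)) * (N * v x) := by
          rw [tsum_mul_right]
      _ ≤ (⨆ y, ∑' ℓ : ℕ, w ℓ y * α ^ (ℓ + 1)) * (N * v x) :=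
          mul_le_mul_of_nonneg_right (le_ciSup hbdd x)
            (mul_nonneg hN0 (hv x).le)
      _ = (⨆ y, ∑' ℓ : ℕ, w ℓ y * α ^ (ℓ + 1)) * N * v x := by ring
  refine ⟨hαbar_le, ?_, hmain⟩
  -- membership of the multistep operator value
  obtain ⟨C, hC⟩ := hJT
  refine ⟨(⨆ y, ∑' ℓ : ℕ, w ℓ y * α ^ (ℓ + 1)) * N + C, fun x => ?_⟩
  rw [div_le_iff₀ (hv x)]
  calc |∑' ℓ : ℕ, w ℓ x * T^[ℓ + 1] J x|
      ≤ |(∑' ℓ : ℕ, w ℓ x * T^[ℓ + 1] J x) - JT x| + |JT x| := by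
        have := abs_sub_abs_le_abs_sub (∑' ℓ : ℕ, w ℓ x * T^[ℓ + 1] J x) (JT x)
        linarith [abs_nonneg (JT x)]
    _ ≤ (⨆ y, ∑' ℓ : ℕ, w ℓ y * α ^ (ℓ + 1)) * N * v x + C * v x := by
        refine add_le_add (hmain x) ?_
        rw [← div_le_iff₀ (hv x)]; exact hC x
    _ = ((⨆ y, ∑' ℓ : ℕ, w ℓ y * α ^ (ℓ + 1)) * N + C) * v x := by ring
end

section
/- Let $T : \mathcal{B}(X) \to \mathcal{B}(X)$ be a contraction with modulus $\alpha \in (0,1)$ and let $w_\ell : X \to [0,\infty)$ satisfy $\sum_{\ell=1}^\infty w_\ell(x) = 1$ for all $x$. Then the operator $T^{(w)}$ defined by $(T^{(w)} J)(x) = \sum_{\ell=1}^\infty w_\ell(x)(T^\ell J)(x)$ is a contraction on $\mathcal{B}(X)$ with modulus $\bar\alpha = \sup_{x \in X} \sum_{\ell=1}^\infty w_\ell(x) \alpha^\ell$, and $\bar\alpha \le \alpha < 1$. -/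
open Filter Topology

/-- the multistep operator `T^{(w)}` is a contraction on `𝓑(X)`
with modulus `ᾱ = ⨆ x, ∑_ℓ w_ℓ(x) α^ℓ`, and `ᾱ ≤ α < 1`.
(Here `w ℓ` stands for `w_{ℓ+1}`.) -/
theorem stmt5 {X : Type*} [Nonempty X] (v : X → ℝ) (hv : ∀ x, 0 < v x)
    (T : (X → ℝ) → (X → ℝ)) (α : ℝ) (hα : α ∈ Set.Ioo (0 : ℝ) 1)
    (hT : ∀ J, memB v J → memB v (T J))
    (hcontr : ∀ J J', memB v J → memB v J' →
      wnorm v (fun x => T J x - T J' x) ≤ α * wnorm v (fun x => J x - J' x))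
    (w : ℕ → X → ℝ) (hw0 : ∀ ℓ x, 0 ≤ w ℓ x)
    (hw1 : ∀ x, HasSum (fun ℓ : ℕ => w ℓ x) 1) :
    (⨆ x, ∑' ℓ : ℕ, w ℓ x * α ^ (ℓ + 1)) ≤ α ∧
    ∀ J J', memB v J → memB v J' →
      wnorm v (fun x => (∑' ℓ : ℕ, w ℓ x * (T^[ℓ + 1] J) x) -
          ∑' ℓ : ℕ, w ℓ x * (T^[ℓ + 1] J') x) ≤
        (⨆ y, ∑' ℓ : ℕ, w ℓ y * α ^ (ℓ + 1)) *
          wnorm v (fun x => J x - J' x) := by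
  obtain ⟨hα0, hα1⟩ := hα
  set Z : X → ℝ := fun _ => (0 : ℝ) with hZdef
  have hZmem : memB v Z := ⟨0, fun x => by simp [hZdef]⟩
  have hwnn : ∀ J : X → ℝ, 0 ≤ wnorm v J := fun J =>
    Real.iSup_nonneg fun x => div_nonneg (abs_nonneg _) (hv x).le
  have habs : ∀ J : X → ℝ, memB v J → ∀ x, |J x| ≤ wnorm v J * v x := by
    rintro J ⟨C, hC⟩ x
    have hb : BddAbove (Set.range fun x => |J x| / v x) :=
      ⟨C, by rintro _ ⟨y, rfl⟩; exact hC y⟩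
    have := le_ciSup hb x
    rwa [div_le_iff₀ (hv x)] at this
  have hwle : ∀ (J : X → ℝ) (M : ℝ), (∀ x, |J x| ≤ M * v x) → wnorm v J ≤ M := by
    intro J M h
    exact ciSup_le fun x => (div_le_iff₀ (hv x)).2 (h x)
  have hmemsub : ∀ J J' : X → ℝ, memB v J → memB v J' →
      memB v (fun x => J x - J' x) := by
    rintro J J' ⟨C, hC⟩ ⟨C', hC'⟩
    refine ⟨C + C', fun x => ?_⟩
    have h1 : |J x - J' x| ≤ |J x| + |J' x| := abs_sub _ _
    have h2 : |J x - J' x| / v x ≤ (|J x| + |J' x|) / v x :=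
      div_le_div_of_nonneg_right h1 (hv x).le
    calc |J x - J' x| / v x ≤ (|J x| + |J' x|) / v x := h2
      _ = |J x| / v x + |J' x| / v x := add_div _ _ _
      _ ≤ C + C' := add_le_add (hC x) (hC' x)
  -- iterate preserves memB
  have hiterB : ∀ (n : ℕ) (J : X → ℝ), memB v J → memB v (T^[n] J) := by
    intro n
    induction n with
    | zero => intro J hJ; simpa using hJ
    | succ n ih =>
      intro J hJ
      rw [Function.iterate_succ_apply']
      exact hT _ (ih J hJ)
  -- iterate contraction
  have hitc : ∀ (n : ℕ) (J J' : X → ℝ), memB v J → memB v J' →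
      wnorm v (fun x => T^[n] J x - T^[n] J' x) ≤
        α ^ n * wnorm v (fun x => J x - J' x) := by
    intro n
    induction n with
    | zero => intro J J' hJ hJ'; simp
    | succ n ih =>
      intro J J' hJ hJ'
      have h1 : wnorm v (fun x => T (T^[n] J) x - T (T^[n] J') x) ≤
          α * wnorm v (fun x => T^[n] J x - T^[n] J' x) :=
        hcontr _ _ (hiterB n J hJ) (hiterB n J' hJ')
      have h2 := ih J J' hJ hJ'
      have h3 : wnorm v (fun x => T^[n+1] J x - T^[n+1] J' x) ≤
          α * (α ^ n * wnorm v (fun x => J x - J' x)) := by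
        simp only [Function.iterate_succ_apply']
        exact h1.trans (by nlinarith [hwnn (fun x => T^[n] J x - T^[n] J' x)])
      calc wnorm v (fun x => T^[n+1] J x - T^[n+1] J' x)
          ≤ α * (α ^ n * wnorm v (fun x => J x - J' x)) := h3
        _ = α ^ (n+1) * wnorm v (fun x => J x - J' x) := by ring
  -- uniform bound on iterates of Z
  set B : ℝ := wnorm v (T Z) with hBdef
  have hB0 : 0 ≤ B := hwnn _
  have h1α : (0:ℝ) < 1 - α := by linarith
  have hZb : ∀ (n : ℕ) (x : X), |T^[n] Z x| ≤ (B / (1 - α)) * v x := by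
    intro n
    induction n with
    | zero =>
      intro x
      simpa [hZdef] using mul_nonneg (div_nonneg hB0 h1α.le) (hv x).le
    | succ n ih =>
      intro x
      have hmem := hiterB n Z hZmem
      have h1 : wnorm v (fun x => T (T^[n] Z) x - T Z x) ≤
          α * wnorm v (fun x => T^[n] Z x - Z x) := hcontr _ _ hmem hZmem
      have h2 : wnorm v (fun x => T^[n] Z x - Z x) ≤ B / (1 - α) :=
        hwle _ _ (fun x => by simpa [hZdef] using ih x)
      have h3 : |T (T^[n] Z) x - T Z x| ≤
          wnorm v (fun x => T (T^[n] Z) x - T Z x) * v x :=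
        habs _ (hmemsub _ _ (hT _ hmem) (hT Z hZmem)) x
      have h4 : |T Z x| ≤ B * v x := habs _ (hT Z hZmem) x
      have h5 : |T (T^[n] Z) x| ≤ |T (T^[n] Z) x - T Z x| + |T Z x| := by
        have := abs_sub_abs_le_abs_sub (T (T^[n] Z) x) (T Z x)
        linarith [abs_nonneg (T Z x)]
      have hw3 : wnorm v (fun x => T (T^[n] Z) x - T Z x) ≤ α * (B / (1 - α)) :=
        h1.trans (mul_le_mul_of_nonneg_left h2 hα0.le)
      have h6 : |T (T^[n] Z) x - T Z x| ≤ α * (B / (1 - α)) * v x :=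
        h3.trans (mul_le_mul_of_nonneg_right hw3 (hv x).le)
      rw [Function.iterate_succ_apply']
      have hvx := hv x
      have key : α * (B / (1 - α)) + B = B / (1 - α) := by
        field_simp
        ring
      nlinarith
  -- uniform bound on iterates of J
  have hJb : ∀ (J : X → ℝ), memB v J → ∀ (n : ℕ) (x : X),
      |T^[n] J x| ≤ (wnorm v J + B / (1 - α)) * v x := by
    intro J hJ n x
    have hdiff : (fun x => J x - Z x) = J := by funext y; simp [hZdef]
    have h1 : wnorm v (fun x => T^[n] J x - T^[n] Z x) ≤ α ^ n * wnorm v J := by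
      have := hitc n J Z hJ hZmem
      rwa [hdiff] at this
    have h2 : α ^ n * wnorm v J ≤ wnorm v J := by
      nlinarith [hwnn J, pow_le_one₀ hα0.le hα1.le (n := n), pow_nonneg hα0.le n]
    have h3 : |T^[n] J x - T^[n] Z x| ≤
        wnorm v (fun x => T^[n] J x - T^[n] Z x) * v x :=
      habs _ (hmemsub _ _ (hiterB n J hJ) (hiterB n Z hZmem)) x
    have h4 := hZb n x
    have h5 : |T^[n] J x| ≤ |T^[n] J x - T^[n] Z x| + |T^[n] Z x| := by
      have := abs_sub_abs_le_abs_sub (T^[n] J x) (T^[n] Z x)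
      linarith [abs_nonneg (T^[n] Z x)]
    have hvx := hv x
    nlinarith
  -- summability of the series defining T^{(w)}
  have hsum : ∀ (J : X → ℝ), memB v J → ∀ x : X,
      Summable (fun ℓ : ℕ => w ℓ x * T^[ℓ+1] J x) := by
    intro J hJ x
    apply Summable.of_norm_bounded
      (g := fun ℓ : ℕ => w ℓ x * ((wnorm v J + B / (1 - α)) * v x))
      (((hw1 x).summable).mul_right _)
    intro ℓ
    rw [Real.norm_eq_abs, abs_mul, abs_of_nonneg (hw0 ℓ x)]
    exact mul_le_mul_of_nonneg_left (hJb J hJ (ℓ+1) x) (hw0 ℓ x)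
  -- summability of weights times α powers
  have hpow : ∀ ℓ : ℕ, α ^ (ℓ + 1) ≤ α := by
    intro ℓ
    have := pow_le_pow_of_le_one hα0.le hα1.le (show 1 ≤ ℓ + 1 by omega)
    simpa using this
  have hsumα : ∀ x : X, Summable (fun ℓ : ℕ => w ℓ x * α ^ (ℓ + 1)) := by
    intro x
    apply Summable.of_nonneg_of_le
      (fun ℓ => mul_nonneg (hw0 ℓ x) (pow_nonneg hα0.le _))
      (fun ℓ => mul_le_mul_of_nonneg_left (hpow ℓ) (hw0 ℓ x))
      (((hw1 x).summable).mul_right α)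
  -- each S x ≤ α
  have hS : ∀ x : X, (∑' ℓ : ℕ, w ℓ x * α ^ (ℓ + 1)) ≤ α := by
    intro x
    calc (∑' ℓ : ℕ, w ℓ x * α ^ (ℓ + 1))
        ≤ ∑' ℓ : ℕ, w ℓ x * α :=
          Summable.tsum_le_tsum (fun ℓ => mul_le_mul_of_nonneg_left (hpow ℓ) (hw0 ℓ x))
            (hsumα x) (((hw1 x).summable).mul_right α)
      _ = α := by rw [tsum_mul_right, (hw1 x).tsum_eq, one_mul]
  have hSb : BddAbove (Set.range fun x => ∑' ℓ : ℕ, w ℓ x * α ^ (ℓ + 1)) :=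
    ⟨α, by rintro _ ⟨y, rfl⟩; exact hS y⟩
  refine ⟨ciSup_le hS, ?_⟩
  intro J J' hJ hJ'
  set K := wnorm v (fun x => J x - J' x) with hKdef
  have hK0 : 0 ≤ K := hwnn _
  have hᾱ0 : 0 ≤ ⨆ y, ∑' ℓ : ℕ, w ℓ y * α ^ (ℓ + 1) :=
    Real.iSup_nonneg fun x =>
      tsum_nonneg fun ℓ => mul_nonneg (hw0 ℓ x) (pow_nonneg hα0.le _)
  apply hwle
  intro x
  have h1 := hsum J hJ x
  have h2 := hsum J' hJ' x
  have heq : (∑' ℓ : ℕ, w ℓ x * T^[ℓ+1] J x) - (∑' ℓ : ℕ, w ℓ x * T^[ℓ+1] J' x)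
      = ∑' ℓ : ℕ, w ℓ x * (T^[ℓ+1] J x - T^[ℓ+1] J' x) := by
    rw [← Summable.tsum_sub h1 h2]
    congr 1
    funext ℓ
    ring
  have hgsum : Summable (fun ℓ : ℕ => w ℓ x * α ^ (ℓ + 1) * (K * v x)) :=
    (hsumα x).mul_right _
  have hbound : ∀ ℓ : ℕ, ‖w ℓ x * (T^[ℓ+1] J x - T^[ℓ+1] J' x)‖ ≤
      w ℓ x * α ^ (ℓ + 1) * (K * v x) := by
    intro ℓ
    rw [Real.norm_eq_abs, abs_mul, abs_of_nonneg (hw0 ℓ x)]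
    have h3 : |T^[ℓ+1] J x - T^[ℓ+1] J' x| ≤
        wnorm v (fun x => T^[ℓ+1] J x - T^[ℓ+1] J' x) * v x :=
      habs _ (hmemsub _ _ (hiterB _ J hJ) (hiterB _ J' hJ')) x
    have h4 := hitc (ℓ+1) J J' hJ hJ'
    have hvx := hv x
    have h5 : |T^[ℓ+1] J x - T^[ℓ+1] J' x| ≤ α ^ (ℓ+1) * K * v x := by
      nlinarith
    nlinarith [hw0 ℓ x, abs_nonneg (T^[ℓ+1] J x - T^[ℓ+1] J' x)]
  have h6 : ‖∑' ℓ : ℕ, w ℓ x * (T^[ℓ+1] J x - T^[ℓ+1] J' x)‖ ≤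
      ∑' ℓ : ℕ, w ℓ x * α ^ (ℓ + 1) * (K * v x) :=
    tsum_of_norm_bounded hgsum.hasSum hbound
  have h7 : (∑' ℓ : ℕ, w ℓ x * α ^ (ℓ + 1) * (K * v x)) =
      (∑' ℓ : ℕ, w ℓ x * α ^ (ℓ + 1)) * (K * v x) := tsum_mul_right
  have h8 : (∑' ℓ : ℕ, w ℓ x * α ^ (ℓ + 1)) ≤
      ⨆ y, ∑' ℓ : ℕ, w ℓ y * α ^ (ℓ + 1) := le_ciSup hSb x
  rw [Real.norm_eq_abs] at h6
  rw [heq]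
  have hvx := hv x
  calc |∑' ℓ : ℕ, w ℓ x * (T^[ℓ+1] J x - T^[ℓ+1] J' x)|
      ≤ (∑' ℓ : ℕ, w ℓ x * α ^ (ℓ + 1)) * (K * v x) := by rw [← h7]; exact h6
    _ ≤ (⨆ y, ∑' ℓ : ℕ, w ℓ y * α ^ (ℓ + 1)) * (K * v x) :=
        mul_le_mul_of_nonneg_right h8 (mul_nonneg hK0 hvx.le)
    _ = (⨆ y, ∑' ℓ : ℕ, w ℓ y * α ^ (ℓ + 1)) * K * v x := by ring
end
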